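/- Let n ≡ 3 or 7 (mod 12). There is no 3-SCHGDD of type (n, m^t) for any positive integers m ≡ 1 (mod 2) and t ≡ 2 (mod 4). -/
import Mathlib


/-- The multiset of differences `Δ_{ij}(B)`: for each base block `b ∈ B`, all differences
`x − y` over ordered pairs of distinct points `(i,x), (j,y) ∈ b`. -/
def blockDelta {n M : ℕ} (B : Multiset (Finset (Fin n × ZMod M))) (i j : Fin n) :
    Multiset (ZMod M) :=
  B.bind (fun b =>
    ((b.val ×ˢ b.val).filter (fun p => p.1.1 = i ∧ p.2.1 = j ∧ p.1 ≠ p.2)).map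
      (fun p => p.1.2 - p.2.2))

/-- The subgroup `S = {0, t, …, (m−1)t}` of `Z_{mt}` as a multiset. -/
def holeMultiples (m t : ℕ) : Multiset (ZMod (m * t)) :=
  (Multiset.range m).map (fun c => ((c * t : ℕ) : ZMod (m * t)))

/-- The multiset `Z_{mt} \ S`, each element once. -/
def nonHoleDiffs (m t : ℕ) : Multiset (ZMod (m * t)) :=
  ((Multiset.range (m * t)).map (fun z => (z : ZMod (m * t)))).filter
    (fun z => z ∉ holeMultiples m t)

/-- A semi-cyclic `k`-HGDD of type `(n, m^t)`, given by its multiset `B` of base blocks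
(`k`-subsets of `I_n × Z_{mt}`): developing by `+1` on second coordinates yields a
`k`-HGDD with groups `{i} × Z_{mt}` and holes `I_n × (S + l)`; equivalently,
`Δ_{ij}(B) = Z_{mt} \ S` for `i ≠ j` and `Δ_{ii}(B) = ∅`. -/
def IsSCHGDD (k n m t : ℕ) (B : Multiset (Finset (Fin n × ZMod (m * t)))) : Prop :=
  (∀ b ∈ B, b.card = k) ∧
  (∀ i j : Fin n, i ≠ j → blockDelta B i j = nonHoleDiffs m t) ∧
  (∀ i : Fin n, blockDelta B i i = 0)

/- ### Auxiliary lemmas -/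

lemma my_countP_bind {α β : Type*} (s : Multiset β) (f : β → Multiset α) (p : α → Prop)
    [DecidablePred p] :
    Multiset.countP p (s.bind f) = (s.map (fun b => Multiset.countP p (f b))).sum := by
  induction s using Multiset.induction with
  | empty => simp
  | cons a s ih => simp [Multiset.countP_add, ih]

lemma my_sum_swap {ι α : Type*} (F : Finset ι) (B : Multiset α) (g : ι → α → ℕ) :
    ∑ x ∈ F, (B.map (g x)).sum = (B.map (fun b => ∑ x ∈ F, g x b)).sum := by
  induction B using Multiset.induction with
  | empty => simp
  | cons a s ih => simp [Finset.sum_add_distrib, ih]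

lemma my_sum_countP_fiber {α β : Type*} [Fintype β] [DecidableEq β] (s : Multiset α)
    (p : α → Prop) [DecidablePred p] (f : α → β) :
    ∑ y : β, Multiset.countP (fun a => p a ∧ f a = y) s = Multiset.countP p s := by
  induction s using Multiset.induction with
  | empty => simp
  | cons a s ih =>
    simp only [Multiset.countP_cons, Finset.sum_add_distrib, ih]
    congr 1
    by_cases hp : p a
    · simp [hp]
    · simp [hp]

lemma my_countP_odd_range (M : ℕ) :
    Multiset.countP (fun z => z % 2 = 1) (Multiset.range M) = M / 2 := by
  induction M with
  | zero => simp
  | succ M ih =>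
    rw [Multiset.range_succ, Multiset.countP_cons, ih]
    by_cases h : M % 2 = 1 <;> simp [h] <;> omega

lemma natCast_zmod_two_eq_one (z : ℕ) : ((z : ZMod 2) = 1) ↔ z % 2 = 1 := by
  rw [← ZMod.natCast_mod z 2]
  rcases Nat.mod_two_eq_zero_or_one z with h | h <;> rw [h] <;> decide

lemma nonHoleDiffs_eq (m t : ℕ) :
    nonHoleDiffs m t = ((Multiset.range (m * t)).map (fun z : ℕ => (z : ZMod (m * t)))).filter
      (fun z => z ∉ holeMultiples m t) := by
  unfold nonHoleDiffs
  simp only [Multiset.map_id', Multiset.bind_def, Multiset.pure_def, Multiset.bind_singleton]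

/-- The number of odd elements of `Z_{mt} \ S` is `mt/2`. -/
lemma countP_odd_nonHoleDiffs (m t : ℕ) (ht : 2 ∣ t) (hdvd : (2:ℕ) ∣ m * t) :
    Multiset.countP (fun z => ZMod.castHom hdvd (ZMod 2) z = 1) (nonHoleDiffs m t)
      = m * t / 2 := by
  rw [nonHoleDiffs_eq]
  rw [Multiset.countP_filter]
  rw [Multiset.countP_map, ← Multiset.countP_eq_card_filter]
  rw [← my_countP_odd_range (m * t)]
  apply Multiset.countP_congr rfl
  intro z _
  simp only [map_natCast, natCast_zmod_two_eq_one]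
  rw [eq_iff_iff]
  constructor
  · rintro ⟨h, -⟩; exact h
  · intro h
    refine ⟨h, fun hmem => ?_⟩
    unfold holeMultiples at hmem
    rw [Multiset.mem_map] at hmem
    obtain ⟨c, -, hc⟩ := hmem
    have hzz := congrArg (ZMod.castHom hdvd (ZMod 2)) hc
    rw [map_natCast, map_natCast] at hzz
    obtain ⟨t', rfl⟩ := ht
    have hz0 : (z : ZMod 2) = 0 := by
      rw [← hzz]
      push_cast
      have h20 : (2 : ZMod 2) = 0 := by decide
      rw [h20]
      ring
    rw [← natCast_zmod_two_eq_one] at h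
    rw [h] at hz0
    exact absurd hz0 (by decide)

/-- A block of size `3` contributes a multiple of `4` odd cross-differences. -/
lemma block_count_mod_four {n M : ℕ} (hdvd : (2:ℕ) ∣ M) (b : Finset (Fin n × ZMod M))
    (hb : b.card = 3) :
    Multiset.countP (fun p : (Fin n × ZMod M) × (Fin n × ZMod M) =>
      (ZMod.castHom hdvd (ZMod 2) (p.1.2 - p.2.2) = 1) ∧ p.1 ≠ p.2) (b.val ×ˢ b.val) % 4
      = 0 := by
  have hcard : Multiset.card b.val = 3 := hb
  obtain ⟨u, v, w, hbv⟩ := Multiset.card_eq_three.mp hcard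
  have hnd := b.nodup
  rw [hbv] at hnd
  simp only [Multiset.insert_eq_cons, Multiset.nodup_cons, Multiset.mem_cons,
    Multiset.mem_singleton, Multiset.nodup_singleton] at hnd
  have huv : u ≠ v := fun h => hnd.1 (Or.inl h)
  have huw : u ≠ w := fun h => hnd.1 (Or.inr h)
  have hvw : v ≠ w := hnd.2.1
  rw [hbv]
  simp only [Multiset.insert_eq_cons, ← Multiset.cons_zero, Multiset.cons_product,
    Multiset.zero_product, Multiset.countP_add, Multiset.countP_map,
    ← Multiset.countP_eq_card_filter, Multiset.countP_cons, Multiset.countP_zero,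
    Multiset.map_cons, Multiset.map_zero, map_sub, ne_eq, zero_add, add_zero]
  simp only [huv, huw, hvw, huv.symm, huw.symm, hvw.symm, not_false_eq_true, and_true,
    not_true_eq_false, and_false, if_false, add_zero, zero_add]
  generalize (ZMod.castHom hdvd (ZMod 2)) u.2 = x
  generalize (ZMod.castHom hdvd (ZMod 2)) v.2 = y
  generalize (ZMod.castHom hdvd (ZMod 2)) w.2 = z
  revert x y z
  decide

/-- Let `n ≡ 3, 7 (mod 12)`. There is no `3`-SCHGDD of type `(n, m^t)` for any positive
integers `m ≡ 1 (mod 2)` and `t ≡ 2 (mod 4)`. -/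
theorem no_schgdd_n_three_seven_mod_twelve (n m t : ℕ)
    (hn : n % 12 = 3 ∨ n % 12 = 7) (hm : m % 2 = 1) (ht : t % 4 = 2) :
    ¬ ∃ B : Multiset (Finset (Fin n × ZMod (m * t))), IsSCHGDD 3 n m t B := by
  rintro ⟨B, hcard3, hne, hdiag⟩
  have ht2 : 2 ∣ t := by omega
  have hdvd : (2:ℕ) ∣ m * t := Dvd.dvd.mul_left ht2 m
  -- the total count of odd differences, summed over all ordered pairs of groups
  set q : ZMod (m * t) → Prop := fun z => ZMod.castHom hdvd (ZMod 2) z = 1 with hq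
  set T : ℕ := ∑ y : Fin n × Fin n, Multiset.countP q (blockDelta B y.1 y.2) with hT
  -- Step 1 : T = n (n-1) (mt/2)
  have hval : ∀ y : Fin n × Fin n, Multiset.countP q (blockDelta B y.1 y.2)
      = if y.1 = y.2 then 0 else m * t / 2 := by
    rintro ⟨i, j⟩
    by_cases h : i = j
    · subst h
      simp [hdiag i]
    · rw [if_neg h, hne i j h]
      exact countP_odd_nonHoleDiffs m t ht2 hdvd
  have hcardND : (Finset.univ.filter fun y : Fin n × Fin n => ¬(y.1 = y.2)).card
      = n * (n - 1) := by
    have heq : (Finset.univ.filter fun y : Fin n × Fin n => ¬(y.1 = y.2))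
        = (Finset.univ : Finset (Fin n)).offDiag := by
      ext y
      simp [Finset.mem_offDiag]
    rw [heq, Finset.offDiag_card, Finset.card_univ, Fintype.card_fin, Nat.mul_sub, mul_one]
  have hT1 : T = n * (n - 1) * (m * t / 2) := by
    rw [hT, Finset.sum_congr rfl (fun y _ => hval y), Finset.sum_ite, Finset.sum_const,
      Finset.sum_const, smul_eq_mul, mul_zero, zero_add, smul_eq_mul, hcardND]
  -- Step 2 : T ≡ 0 (mod 4), counting blockwise
  have hinner : ∀ b ∈ B, (∑ y : Fin n × Fin n, Multiset.countP q
      (((b.val ×ˢ b.val).filter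
        (fun p => p.1.1 = y.1 ∧ p.2.1 = y.2 ∧ p.1 ≠ p.2)).map (fun p => p.1.2 - p.2.2)))
      % 4 = 0 := by
    intro b hb
    have hstep : ∀ y : Fin n × Fin n, Multiset.countP q
        (((b.val ×ˢ b.val).filter
          (fun p => p.1.1 = y.1 ∧ p.2.1 = y.2 ∧ p.1 ≠ p.2)).map (fun p => p.1.2 - p.2.2))
        = Multiset.countP
            (fun p : (Fin n × ZMod (m*t)) × (Fin n × ZMod (m*t)) =>
              ((ZMod.castHom hdvd (ZMod 2) (p.1.2 - p.2.2) = 1) ∧ p.1 ≠ p.2)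
                ∧ (p.1.1, p.2.1) = y)
            (b.val ×ˢ b.val) := by
      intro y
      rw [Multiset.countP_map, ← Multiset.countP_eq_card_filter, Multiset.countP_filter]
      apply Multiset.countP_congr rfl
      intro p _
      rw [eq_iff_iff, hq]
      constructor
      · rintro ⟨h1, h2, h3, h4⟩
        exact ⟨⟨h1, h4⟩, by rw [Prod.ext_iff]; exact ⟨h2, h3⟩⟩
      · rintro ⟨⟨h1, h4⟩, h⟩
        rw [Prod.ext_iff] at h
        exact ⟨h1, h.1, h.2, h4⟩
    rw [Finset.sum_congr rfl (fun y _ => hstep y),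
      my_sum_countP_fiber (b.val ×ˢ b.val)
        (fun p => (ZMod.castHom hdvd (ZMod 2) (p.1.2 - p.2.2) = 1) ∧ p.1 ≠ p.2)
        (fun p => (p.1.1, p.2.1))]
    exact block_count_mod_four hdvd b (hcard3 b hb)
  have hT4 : 4 ∣ T := by
    have hrw : T = (B.map (fun b => ∑ y : Fin n × Fin n, Multiset.countP q
        (((b.val ×ˢ b.val).filter
          (fun p => p.1.1 = y.1 ∧ p.2.1 = y.2 ∧ p.1 ≠ p.2)).map
            (fun p => p.1.2 - p.2.2)))).sum := by
      rw [hT]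
      simp only [blockDelta, my_countP_bind]
      exact my_sum_swap _ B _
    rw [hrw]
    apply Multiset.dvd_sum
    intro x hx
    rw [Multiset.mem_map] at hx
    obtain ⟨b, hb, rfl⟩ := hx
    exact Nat.dvd_of_mod_eq_zero (hinner b hb)
  -- Step 3 : arithmetic contradiction
  obtain ⟨a, ha⟩ : ∃ a, n = 4 * a + 3 := ⟨n / 4, by omega⟩
  obtain ⟨bb, hbb⟩ : ∃ b', m = 2 * b' + 1 := ⟨m / 2, by omega⟩
  obtain ⟨c, hc⟩ : ∃ c, t = 4 * c + 2 := ⟨t / 4, by omega⟩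
  have hdiv : m * t / 2 = (2 * bb + 1) * (2 * c + 1) := by
    rw [hbb, hc, show (2*bb+1) * (4*c+2) = 2 * ((2*bb+1) * (2*c+1)) by ring,
      Nat.mul_div_cancel_left _ (by norm_num)]
  set K : ℕ := (4*a+3) * (2*a+1) * ((2*bb+1) * (2*c+1)) with hKdef
  have hK : T = 2 * K := by
    rw [hT1, hdiv, ha, show 4*a+3-1 = 4*a+2 by omega, hKdef]; ring
  have hodd : K % 2 = 1 := by
    rw [hKdef]
    exact Nat.odd_iff.mp
      (((Nat.odd_iff.mpr (by omega)).mul (Nat.odd_iff.mpr (by omega))).mul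
        ((Nat.odd_iff.mpr (by omega)).mul (Nat.odd_iff.mpr (by omega))))
  omega
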